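/- Let G be a GP5-graph constructed from a connected graph H with n vertices. Every paired dominating set of G contains at least four vertices from {a_i, b_i, c_i, d_i, e_i} for each i; hence γ_{pr}(G) ≥ 4n. -/

import Mathlib

open SimpleGraph Finset

/-- `D` is a dominating set of `G`. -/
def Dominating {V : Type*} (G : SimpleGraph V) (D : Finset V) : Prop :=
  ∀ v : V, ∃ u ∈ D, u = v ∨ G.Adj u v

/-- `D` is a semipaired dominating set of `G`: a dominating set whose vertices can be
partitioned into pairs (via a fixed-point-free involution) at distance at most 2. -/
def SemiPairedDom {V : Type*} (G : SimpleGraph V) (D : Finset V) : Prop :=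
  Dominating G D ∧ ∃ f : V → V,
    (∀ u ∈ D, f u ∈ D) ∧ (∀ u ∈ D, f (f u) = u) ∧ (∀ u ∈ D, f u ≠ u) ∧
    (∀ u ∈ D, G.Adj u (f u) ∨ ∃ w, G.Adj u w ∧ G.Adj w (f u))

/-- `D` is a paired dominating set of `G`: a dominating set whose induced subgraph has a
perfect matching (encoded by a fixed-point-free involution pairing adjacent vertices). -/
def PairedDom {V : Type*} (G : SimpleGraph V) (D : Finset V) : Prop :=
  Dominating G D ∧ ∃ f : V → V,
    (∀ u ∈ D, f u ∈ D) ∧ (∀ u ∈ D, f (f u) = u) ∧ (∀ u ∈ D, f u ≠ u) ∧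
    (∀ u ∈ D, G.Adj u (f u))

/-- The domination number. -/
noncomputable def domNum (V : Type*) [Fintype V] (G : SimpleGraph V) : ℕ :=
  sInf {k : ℕ | ∃ D : Finset V, Dominating G D ∧ D.card = k}

/-- The semipaired domination number. -/
noncomputable def semiPairedDomNum (V : Type*) [Fintype V] (G : SimpleGraph V) : ℕ :=
  sInf {k : ℕ | ∃ D : Finset V, SemiPairedDom G D ∧ D.card = k}

/-- The paired domination number. -/
noncomputable def pairedDomNum (V : Type*) [Fintype V] (G : SimpleGraph V) : ℕ :=
  sInf {k : ℕ | ∃ D : Finset V, PairedDom G D ∧ D.card = k}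

/-- The GP5-graph obtained from `H` by attaching, for each vertex `a`, a disjoint path
`a_a – b_a – c_a – d_a – e_a` (the vertices `Sum.inr (a, 0), …, Sum.inr (a, 4)`) and
joining `a` to the central vertex `c_a = Sum.inr (a, 2)`. -/
def GP5 {α : Type*} (H : SimpleGraph α) : SimpleGraph (α ⊕ α × Fin 5) :=
  SimpleGraph.fromRel (fun u v =>
    (∃ a b, u = Sum.inl a ∧ v = Sum.inl b ∧ H.Adj a b) ∨
    (∃ a, u = Sum.inl a ∧ v = Sum.inr (a, 2)) ∨
    (∃ (a : α) (j k : Fin 5), u = Sum.inr (a, j) ∧ v = Sum.inr (a, k) ∧ (k : ℕ) = (j : ℕ) + 1))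

lemma gp5_adj_inr {α : Type*} (H : SimpleGraph α) (a : α) (k : Fin 5) (u : α ⊕ α × Fin 5) :
    (GP5 H).Adj u (Sum.inr (a, k)) ↔
      (u = Sum.inl a ∧ k = 2) ∨
      (∃ j : Fin 5, u = Sum.inr (a, j) ∧ ((j : ℕ) = (k : ℕ) + 1 ∨ (k : ℕ) = (j : ℕ) + 1)) := by
  constructor
  · rintro ⟨hne, h | h⟩
    · rcases h with ⟨x, y, hu, hv, _⟩ | ⟨x, hu, hv⟩ | ⟨x, j, k', hu, hv, hk⟩
      · exact absurd hv (by simp)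
      · simp only [Sum.inr.injEq, Prod.mk.injEq] at hv
        obtain ⟨rfl, rfl⟩ := hv
        exact Or.inl ⟨hu, rfl⟩
      · simp only [Sum.inr.injEq, Prod.mk.injEq] at hv
        obtain ⟨rfl, rfl⟩ := hv
        exact Or.inr ⟨j, hu, Or.inr hk⟩
    · rcases h with ⟨x, y, hv, hu, _⟩ | ⟨x, hv, hu⟩ | ⟨x, j, k', hv, hu, hk⟩
      · exact absurd hv (by simp)
      · exact absurd hv (by simp)
      · simp only [Sum.inr.injEq, Prod.mk.injEq] at hv
        obtain ⟨rfl, rfl⟩ := hv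
        exact Or.inr ⟨k', hu, Or.inl hk⟩
  · rintro (⟨rfl, rfl⟩ | ⟨j, rfl, hj | hj⟩)
    · exact ⟨by simp, Or.inl (Or.inr (Or.inl ⟨a, rfl, rfl⟩))⟩
    · exact ⟨by simp; omega, Or.inr (Or.inr (Or.inr ⟨a, k, j, rfl, rfl, hj⟩))⟩
    · exact ⟨by simp; omega, Or.inl (Or.inr (Or.inr ⟨a, j, k, rfl, rfl, hj⟩))⟩

open scoped Classical in
lemma gp5_aux {α : Type*} [Fintype α] [DecidableEq α]
    (H : SimpleGraph α) (D : Finset (α ⊕ α × Fin 5)) (hD : PairedDom (GP5 H) D) :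
    (∀ a : α, 4 ≤ (D.filter fun v => ∃ k : Fin 5, v = Sum.inr (a, k)).card) ∧
    4 * Fintype.card α ≤ D.card := by
  obtain ⟨hdom, f, hfD, hff, hfne, hfadj⟩ := hD
  have key : ∀ a : α, 4 ≤ (D.filter fun v => ∃ k : Fin 5, v = Sum.inr (a, k)).card := by
    intro a
    set p : Fin 5 → α ⊕ α × Fin 5 := fun k => Sum.inr (a, k) with hp
    have hadj0 : ∀ u, (GP5 H).Adj u (p 0) → u = p 1 := by
      intro u hu
      rcases (gp5_adj_inr H a 0 u).1 hu with ⟨_, h2⟩ | ⟨j, rfl, hj | hj⟩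
      · exact absurd h2 (by decide)
      · have : j = 1 := by omega
        rw [this]
      · omega
    have hadj4 : ∀ u, (GP5 H).Adj u (p 4) → u = p 3 := by
      intro u hu
      rcases (gp5_adj_inr H a 4 u).1 hu with ⟨_, h2⟩ | ⟨j, rfl, hj | hj⟩
      · exact absurd h2 (by decide)
      · omega
      · have : j = 3 := by omega
        rw [this]
    have hadj1 : ∀ u, (GP5 H).Adj u (p 1) → u = p 0 ∨ u = p 2 := by
      intro u hu
      rcases (gp5_adj_inr H a 1 u).1 hu with ⟨_, h2⟩ | ⟨j, rfl, hj | hj⟩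
      · exact absurd h2 (by decide)
      · right; have : j = 2 := by omega
        rw [this]
      · left; have : j = 0 := by omega
        rw [this]
    have hadj3 : ∀ u, (GP5 H).Adj u (p 3) → u = p 2 ∨ u = p 4 := by
      intro u hu
      rcases (gp5_adj_inr H a 3 u).1 hu with ⟨_, h2⟩ | ⟨j, rfl, hj | hj⟩
      · exact absurd h2 (by decide)
      · right; have : j = 4 := by omega
        rw [this]
      · left; have : j = 2 := by omega
        rw [this]
    -- domination facts
    have h01 : p 0 ∈ D ∨ p 1 ∈ D := by
      obtain ⟨u, huD, rfl | hu⟩ := hdom (p 0)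
      · exact Or.inl huD
      · exact Or.inr (hadj0 u hu ▸ huD)
    have h34 : p 3 ∈ D ∨ p 4 ∈ D := by
      obtain ⟨u, huD, rfl | hu⟩ := hdom (p 4)
      · exact Or.inr huD
      · exact Or.inl (hadj4 u hu ▸ huD)
    have h0to1 : p 0 ∈ D → p 1 ∈ D := fun h0 => by
      have := hadj0 (f (p 0)) (hfadj _ h0).symm
      exact this ▸ hfD _ h0
    have h4to3 : p 4 ∈ D → p 3 ∈ D := fun h4 => by
      have := hadj4 (f (p 4)) (hfadj _ h4).symm
      exact this ▸ hfD _ h4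
    have h1f : p 1 ∈ D → p 0 ∉ D → f (p 1) = p 2 ∧ p 2 ∈ D := fun h1 h0 => by
      rcases hadj1 (f (p 1)) (hfadj _ h1).symm with h | h
      · exact absurd (h ▸ hfD _ h1) h0
      · exact ⟨h, h ▸ hfD _ h1⟩
    have h3f : p 3 ∈ D → p 4 ∉ D → f (p 3) = p 2 ∧ p 2 ∈ D := fun h3 h4 => by
      rcases hadj3 (f (p 3)) (hfadj _ h3).symm with h | h
      · exact ⟨h, h ▸ hfD _ h3⟩
      · exact absurd (h ▸ hfD _ h3) h4
    -- the four elements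
    have main : ∃ S : Finset (α ⊕ α × Fin 5),
        S ⊆ D.filter (fun v => ∃ k : Fin 5, v = Sum.inr (a, k)) ∧ S.card = 4 := by
      have memf : ∀ k : Fin 5, p k ∈ D → p k ∈ D.filter (fun v => ∃ k : Fin 5, v = Sum.inr (a, k)) :=
        fun k hk => mem_filter.2 ⟨hk, k, rfl⟩
      by_cases h0 : p 0 ∈ D
      · by_cases h4 : p 4 ∈ D
        · refine ⟨{p 0, p 1, p 3, p 4}, ?_, ?_⟩
          · intro x hx
            simp only [mem_insert, mem_singleton] at hx
            rcases hx with rfl | rfl | rfl | rfl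
            exacts [memf _ h0, memf _ (h0to1 h0), memf _ (h4to3 h4), memf _ h4]
          · simp [hp, Finset.card_insert_of_notMem]
        · have h3 : p 3 ∈ D := h34.resolve_right h4
          have h2 := (h3f h3 h4).2
          refine ⟨{p 0, p 1, p 2, p 3}, ?_, ?_⟩
          · intro x hx
            simp only [mem_insert, mem_singleton] at hx
            rcases hx with rfl | rfl | rfl | rfl
            exacts [memf _ h0, memf _ (h0to1 h0), memf _ h2, memf _ h3]
          · simp [hp, Finset.card_insert_of_notMem]
      · have h1 : p 1 ∈ D := h01.resolve_left h0
        obtain ⟨hf1, h2⟩ := h1f h1 h0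
        by_cases h4 : p 4 ∈ D
        · refine ⟨{p 1, p 2, p 3, p 4}, ?_, ?_⟩
          · intro x hx
            simp only [mem_insert, mem_singleton] at hx
            rcases hx with rfl | rfl | rfl | rfl
            exacts [memf _ h1, memf _ h2, memf _ (h4to3 h4), memf _ h4]
          · simp [hp, Finset.card_insert_of_notMem]
        · exfalso
          have h3 : p 3 ∈ D := h34.resolve_right h4
          obtain ⟨hf3, _⟩ := h3f h3 h4
          have e1 : f (p 2) = p 1 := by rw [← hf1, hff _ h1]
          have e3 : f (p 2) = p 3 := by rw [← hf3, hff _ h3]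
          have : p 1 = p 3 := e1 ▸ e3
          simp [hp] at this
    obtain ⟨S, hS, hcard⟩ := main
    calc 4 = S.card := hcard.symm
    _ ≤ _ := card_le_card hS
  refine ⟨key, ?_⟩
  have hdisj : ((univ : Finset α) : Set α).PairwiseDisjoint
      (fun a => D.filter fun v => ∃ k : Fin 5, v = Sum.inr (a, k)) := by
    intro a _ b _ hab
    simp only [Finset.disjoint_left, mem_filter]
    rintro x ⟨_, k, rfl⟩ ⟨_, k', h⟩
    simp only [Sum.inr.injEq, Prod.mk.injEq] at h
    exact hab h.1
  calc 4 * Fintype.card α = ∑ _a : α, 4 := by simp [mul_comm]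
  _ ≤ ∑ a : α, (D.filter fun v => ∃ k : Fin 5, v = Sum.inr (a, k)).card :=
      Finset.sum_le_sum (fun a _ => key a)
  _ = (univ.biUnion fun a => D.filter fun v => ∃ k : Fin 5, v = Sum.inr (a, k)).card :=
      (Finset.card_biUnion (fun a ha b hb hab => hdisj ha hb hab)).symm
  _ ≤ D.card := card_le_card (Finset.biUnion_subset.2 fun a _ => filter_subset _ _)

open scoped Classical in
/-- Every paired dominating set of the GP5-graph contains at least four
vertices from `{a_i, b_i, c_i, d_i, e_i}` for each vertex `i` of `H`; hence
`γ_{pr}(G) ≥ 4n`. -/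
theorem gp5_pairedDom_lower {α : Type*} [Fintype α] [DecidableEq α]
    (H : SimpleGraph α) (hH : H.Connected)
    (D : Finset (α ⊕ α × Fin 5)) (hD : PairedDom (GP5 H) D) :
    (∀ a : α, 4 ≤ (D.filter fun v => ∃ k : Fin 5, v = Sum.inr (a, k)).card) ∧
    4 * Fintype.card α ≤ D.card ∧
    4 * Fintype.card α ≤ pairedDomNum (α ⊕ α × Fin 5) (GP5 H) := by
  obtain ⟨h1, h2⟩ := gp5_aux H D hD
  refine ⟨h1, h2, ?_⟩
  refine le_csInf ⟨D.card, ⟨D, hD, rfl⟩⟩ ?_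
  rintro k ⟨D', hD', rfl⟩
  exact (gp5_aux H D' hD').2
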